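/- Under the hypotheses of the preceding statement (doubly stochastic A(t) with |[Φ(t,s)]_{ij} − 1/N| ≤ Ĉ τ^{t−s}, Ĉ > 1, τ ∈ (0,1); λ_{i,1} = 0; μ_{i,t} = Σ_j a_{ij}(t) λ_{j,t}; λ_{i,t+1} = [μ_{i,t} + α_t(z_{i,t} − γ_t μ_{i,t})]₊; ‖z_{i,t} − γ_t μ_{i,t}‖ ≤ 2C; α_t non-increasing), let λ̄_t = (1/N) Σ_{i=1}^N λ_{i,t} and D = 2N²ĈC/(1−τ) + 2NC. Then Σ_{t=1}^T Σ_{i=1}^N ‖μ_{i,t} − λ̄_t‖ ≤ Σ_{t=1}^T Σ_{i=1}^N ‖λ_{i,t} − λ̄_t‖ ≤ D Σ_{t=1}^T α_t. -/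

import Mathlib

lemma euc_sum_apply {N n : ℕ} (v : Fin N → EuclideanSpace ℝ (Fin n)) (k : Fin n) :
    (∑ j, v j) k = ∑ j, v j k := by
  induction (Finset.univ : Finset (Fin N)) using Finset.induction with
  | empty => simp
  | @insert a s h ih => rw [Finset.sum_insert h, Finset.sum_insert h, ← ih]; simp

lemma euc_norm_le {n : ℕ} (x y : EuclideanSpace ℝ (Fin n)) (h : ∀ k, |x k| ≤ |y k|) :
    ‖x‖ ≤ ‖y‖ := by
  rw [EuclideanSpace.norm_eq, EuclideanSpace.norm_eq]
  apply Real.sqrt_le_sqrt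
  apply Finset.sum_le_sum
  intro k _
  rw [Real.norm_eq_abs, Real.norm_eq_abs]
  exact pow_le_pow_left₀ (abs_nonneg _) (h k) 2

lemma max_sub_abs_le (m a : ℝ) (hm : 0 ≤ m) : |max (m + a) 0 - m| ≤ |a| := by
  rcases le_total (m + a) 0 with h | h
  · rw [max_eq_right h, abs_le]
    constructor
    · nlinarith [le_abs_self a, neg_abs_le a]
    · nlinarith [le_abs_self a, neg_abs_le a]
  · rw [max_eq_left h]; simp

/-- Cumulative consensus error of the dual variables: with
`D = 2N²ĈC/(1−τ) + 2NC`, one has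
`∑_{t=1}^T ∑_i ‖μ_{i,t} − λ̄_t‖ ≤ ∑_{t=1}^T ∑_i ‖λ_{i,t} − λ̄_t‖ ≤ D ∑_{t=1}^T α_t`. -/
theorem stmt_7 (N n T : ℕ) (hN : 0 < N)
    (C Chat τ : ℝ) (hC : 0 < C) (hChat : 1 < Chat) (hτ0 : 0 < τ) (hτ1 : τ < 1)
    (α γ : ℕ → ℝ)
    (hα_pos : ∀ t, 1 ≤ t → 0 < α t)
    (hα_mono : ∀ t, 1 ≤ t → α (t + 1) ≤ α t)
    (A : ℕ → Matrix (Fin N) (Fin N) ℝ)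
    (hA_nonneg : ∀ t, 1 ≤ t → ∀ i j, 0 ≤ A t i j)
    (hA_row : ∀ t, 1 ≤ t → ∀ i, ∑ j, A t i j = 1)
    (hA_col : ∀ t, 1 ≤ t → ∀ j, ∑ i, A t i j = 1)
    (Φ : ℕ → ℕ → Matrix (Fin N) (Fin N) ℝ)
    (hΦ_refl : ∀ s, Φ s s = 1)
    (hΦ_rec : ∀ t s, s ≤ t → Φ (t + 1) s = A t * Φ t s)
    (hΦ_bound : ∀ t s, 1 ≤ s → s ≤ t → ∀ i j,
      |Φ t s i j - 1 / (N : ℝ)| ≤ Chat * τ ^ (t - s))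
    (lam mu z : Fin N → ℕ → EuclideanSpace ℝ (Fin n))
    (hlam1 : ∀ i, lam i 1 = 0)
    (hmu : ∀ i t, 1 ≤ t → mu i t = ∑ j, A t i j • lam j t)
    (hlam : ∀ i t, 1 ≤ t → ∀ k : Fin n,
      lam i (t + 1) k = max (mu i t k + α t * (z i t k - γ t * mu i t k)) 0)
    (hz : ∀ i t, 1 ≤ t → ‖z i t - γ t • mu i t‖ ≤ 2 * C) :
    (∑ t ∈ Finset.Icc 1 T, ∑ i, ‖mu i t - (N : ℝ)⁻¹ • ∑ j, lam j t‖ ≤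
      ∑ t ∈ Finset.Icc 1 T, ∑ i, ‖lam i t - (N : ℝ)⁻¹ • ∑ j, lam j t‖) ∧
    ∑ t ∈ Finset.Icc 1 T, ∑ i, ‖lam i t - (N : ℝ)⁻¹ • ∑ j, lam j t‖ ≤
      (2 * N ^ 2 * Chat * C / (1 - τ) + 2 * N * C) * ∑ t ∈ Finset.Icc 1 T, α t := by
  have hNR : (0 : ℝ) < N := by exact_mod_cast hN
  set lbar : ℕ → EuclideanSpace ℝ (Fin n) := fun t => (N : ℝ)⁻¹ • ∑ j, lam j t with hlbar
  set w : Fin N → ℕ → EuclideanSpace ℝ (Fin n) := fun i s => lam i (s + 1) - mu i s with hwdef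
  -- nonnegativity of lam
  have hlam_nonneg : ∀ t, 1 ≤ t → ∀ (i : Fin N) (k : Fin n), 0 ≤ lam i t k := by
    intro t ht
    induction t, ht using Nat.le_induction with
    | base => intro i k; rw [hlam1]; simp
    | succ t ht ih => intro i k; rw [hlam i t ht k]; exact le_max_right _ _
  have hmu_nonneg : ∀ t, 1 ≤ t → ∀ (i : Fin N) (k : Fin n), 0 ≤ mu i t k := by
    intro t ht i k
    rw [hmu i t ht, euc_sum_apply]
    apply Finset.sum_nonneg
    intro j _
    have : (A t i j • lam j t) k = A t i j * lam j t k := rfl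
    rw [this]
    exact mul_nonneg (hA_nonneg t ht i j) (hlam_nonneg t ht j k)
  -- perturbation bound
  have hw_bound : ∀ t, 1 ≤ t → ∀ i : Fin N, ‖w i t‖ ≤ 2 * C * α t := by
    intro t ht i
    have h1 : ‖w i t‖ ≤ ‖α t • (z i t - γ t • mu i t)‖ := by
      apply euc_norm_le
      intro k
      have hx : w i t k = lam i (t + 1) k - mu i t k := rfl
      have hy : (α t • (z i t - γ t • mu i t)) k = α t * (z i t k - γ t * mu i t k) := rfl
      rw [hx, hy, hlam i t ht k]
      rw [abs_mul]
      have := max_sub_abs_le (mu i t k) (α t * (z i t k - γ t * mu i t k)) (hmu_nonneg t ht i k)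
      rwa [abs_mul] at this
    calc ‖w i t‖ ≤ ‖α t • (z i t - γ t • mu i t)‖ := h1
      _ = |α t| * ‖z i t - γ t • mu i t‖ := by rw [norm_smul, Real.norm_eq_abs]
      _ ≤ α t * (2 * C) := by
          rw [abs_of_pos (hα_pos t ht)]
          exact mul_le_mul_of_nonneg_left (hz i t ht) (le_of_lt (hα_pos t ht))
      _ = 2 * C * α t := by ring
  -- column sums of Φ
  have hΦcol : ∀ s, 1 ≤ s → ∀ t, s ≤ t → ∀ k, ∑ i, Φ t s i k = 1 := by
    intro s hs t hst
    induction t, hst using Nat.le_induction with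
    | base => intro k; rw [hΦ_refl]; simp [Matrix.one_apply]
    | succ t hst ih =>
        intro k
        rw [hΦ_rec t s hst]
        simp only [Matrix.mul_apply]
        rw [Finset.sum_comm]
        have : ∀ j, ∑ i, A t i j * Φ t s j k = Φ t s j k := by
          intro j
          rw [← Finset.sum_mul, hA_col t (le_trans hs hst) j, one_mul]
        rw [Finset.sum_congr rfl (fun j _ => this j)]
        exact ih k
  -- representation of lam
  have hrep : ∀ t, ∀ i : Fin N,
      lam i (t + 1) = ∑ s ∈ Finset.Icc 1 t, ∑ j, Φ (t + 1) (s + 1) i j • w j s := by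
    intro t
    induction t with
    | zero => intro i; simp [hlam1]
    | succ t ih =>
        intro i
        have ht1 : 1 ≤ t + 1 := Nat.le_add_left 1 t
        have hstep : lam i (t + 2) = mu i (t + 1) + w i (t + 1) := by
          simp [hwdef]
        rw [hstep, hmu i (t + 1) ht1]
        have hsub : ∀ j : Fin N, lam j (t + 1) =
            ∑ s ∈ Finset.Icc 1 t, ∑ k, Φ (t + 1) (s + 1) j k • w k s := ih
        calc (∑ j, A (t + 1) i j • lam j (t + 1)) + w i (t + 1)
            = (∑ s ∈ Finset.Icc 1 t, ∑ k, Φ (t + 1 + 1) (s + 1) i k • w k s) + w i (t + 1) := by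
              congr 1
              calc ∑ j, A (t + 1) i j • lam j (t + 1)
                  = ∑ j, ∑ s ∈ Finset.Icc 1 t, ∑ k,
                      (A (t + 1) i j * Φ (t + 1) (s + 1) j k) • w k s := by
                    apply Finset.sum_congr rfl; intro j _
                    rw [hsub j, Finset.smul_sum]
                    apply Finset.sum_congr rfl; intro s _
                    rw [Finset.smul_sum]
                    apply Finset.sum_congr rfl; intro k _
                    rw [smul_smul]
                _ = ∑ s ∈ Finset.Icc 1 t, ∑ j, ∑ k,
                      (A (t + 1) i j * Φ (t + 1) (s + 1) j k) • w k s := Finset.sum_comm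
                _ = ∑ s ∈ Finset.Icc 1 t, ∑ k, Φ (t + 1 + 1) (s + 1) i k • w k s := by
                    apply Finset.sum_congr rfl; intro s hs
                    rw [Finset.sum_comm]
                    apply Finset.sum_congr rfl; intro k _
                    rw [← Finset.sum_smul]
                    congr 1
                    have hsle : s + 1 ≤ t + 1 := by
                      simp only [Finset.mem_Icc] at hs; omega
                    rw [hΦ_rec (t + 1) (s + 1) hsle, Matrix.mul_apply]
          _ = ∑ s ∈ Finset.Icc 1 (t + 1), ∑ k, Φ (t + 1 + 1) (s + 1) i k • w k s := by
              rw [Finset.sum_Icc_succ_top ht1]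
              congr 1
              rw [hΦ_refl]
              simp [Matrix.one_apply]
  -- difference from average
  have hdiff : ∀ t, ∀ i : Fin N, lam i (t + 1) - lbar (t + 1) =
      ∑ s ∈ Finset.Icc 1 t, ∑ j, (Φ (t + 1) (s + 1) i j - (N : ℝ)⁻¹) • w j s := by
    intro t i
    have hbar : lbar (t + 1) = ∑ s ∈ Finset.Icc 1 t, ∑ j, (N : ℝ)⁻¹ • w j s := by
      rw [hlbar]
      simp only
      rw [Finset.sum_congr rfl (fun j _ => hrep t j)]
      rw [Finset.sum_comm]
      rw [Finset.smul_sum]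
      apply Finset.sum_congr rfl
      intro s hs
      rw [Finset.sum_comm, Finset.smul_sum]
      apply Finset.sum_congr rfl
      intro j _
      rw [← Finset.sum_smul, smul_smul]
      have hsle : s + 1 ≤ t + 1 := by simp only [Finset.mem_Icc] at hs; omega
      rw [hΦcol (s + 1) (Nat.le_add_left 1 s) (t + 1) hsle j, mul_one]
    rw [hrep t i, hbar, ← Finset.sum_sub_distrib]
    apply Finset.sum_congr rfl
    intro s _
    rw [← Finset.sum_sub_distrib]
    apply Finset.sum_congr rfl
    intro j _
    rw [sub_smul]
  -- norm bound per (t, i)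
  have hnorm : ∀ t, ∀ i : Fin N, ‖lam i (t + 1) - lbar (t + 1)‖ ≤
      ∑ s ∈ Finset.Icc 1 t, (N : ℝ) * (Chat * τ ^ (t - s) * (2 * C * α s)) := by
    intro t i
    rw [hdiff t i]
    calc ‖∑ s ∈ Finset.Icc 1 t, ∑ j, (Φ (t + 1) (s + 1) i j - (N : ℝ)⁻¹) • w j s‖
        ≤ ∑ s ∈ Finset.Icc 1 t, ‖∑ j, (Φ (t + 1) (s + 1) i j - (N : ℝ)⁻¹) • w j s‖ :=
          norm_sum_le _ _
      _ ≤ ∑ s ∈ Finset.Icc 1 t, (N : ℝ) * (Chat * τ ^ (t - s) * (2 * C * α s)) := by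
          apply Finset.sum_le_sum
          intro s hs
          simp only [Finset.mem_Icc] at hs
          calc ‖∑ j, (Φ (t + 1) (s + 1) i j - (N : ℝ)⁻¹) • w j s‖
              ≤ ∑ j, ‖(Φ (t + 1) (s + 1) i j - (N : ℝ)⁻¹) • w j s‖ := norm_sum_le _ _
            _ ≤ ∑ _j : Fin N, Chat * τ ^ (t - s) * (2 * C * α s) := by
                apply Finset.sum_le_sum
                intro j _
                rw [norm_smul, Real.norm_eq_abs]
                have hb : |Φ (t + 1) (s + 1) i j - (N : ℝ)⁻¹| ≤ Chat * τ ^ (t - s) := by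
                  have := hΦ_bound (t + 1) (s + 1) (Nat.le_add_left 1 s)
                    (by omega) i j
                  rw [one_div] at this
                  rwa [show t + 1 - (s + 1) = t - s by omega] at this
                have hwb := hw_bound s hs.1 j
                have h1 : 0 ≤ |Φ (t + 1) (s + 1) i j - (N : ℝ)⁻¹| := abs_nonneg _
                have h2 : (0:ℝ) ≤ ‖w j s‖ := norm_nonneg _
                calc |Φ (t + 1) (s + 1) i j - (N : ℝ)⁻¹| * ‖w j s‖
                    ≤ (Chat * τ ^ (t - s)) * (2 * C * α s) := by
                      apply mul_le_mul hb hwb h2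
                      positivity
                  _ = Chat * τ ^ (t - s) * (2 * C * α s) := by ring
            _ = (N : ℝ) * (Chat * τ ^ (t - s) * (2 * C * α s)) := by
                rw [Finset.sum_const, Finset.card_univ, Fintype.card_fin, nsmul_eq_mul]
  -- first inequality, per t
  have hfirst : ∀ t, 1 ≤ t → ∑ i, ‖mu i t - lbar t‖ ≤ ∑ i, ‖lam i t - lbar t‖ := by
    intro t ht
    have step1 : ∀ i : Fin N, ‖mu i t - lbar t‖ ≤ ∑ j, A t i j * ‖lam j t - lbar t‖ := by
      intro i
      have heq : mu i t - lbar t = ∑ j, A t i j • (lam j t - lbar t) := by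
        calc mu i t - lbar t
            = (∑ j, A t i j • lam j t) - (∑ j, A t i j) • lbar t := by
              rw [hmu i t ht, hA_row t ht i, one_smul]
          _ = ∑ j, A t i j • (lam j t - lbar t) := by
              rw [Finset.sum_smul, ← Finset.sum_sub_distrib]
              apply Finset.sum_congr rfl
              intro j _
              rw [smul_sub]
      rw [heq]
      calc ‖∑ j, A t i j • (lam j t - lbar t)‖
          ≤ ∑ j, ‖A t i j • (lam j t - lbar t)‖ := norm_sum_le _ _
        _ = ∑ j, A t i j * ‖lam j t - lbar t‖ := by
            apply Finset.sum_congr rfl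
            intro j _
            rw [norm_smul, Real.norm_eq_abs, abs_of_nonneg (hA_nonneg t ht i j)]
    calc ∑ i, ‖mu i t - lbar t‖
        ≤ ∑ i, ∑ j, A t i j * ‖lam j t - lbar t‖ := Finset.sum_le_sum (fun i _ => step1 i)
      _ = ∑ j, (∑ i, A t i j) * ‖lam j t - lbar t‖ := by
          rw [Finset.sum_comm]
          apply Finset.sum_congr rfl
          intro j _
          rw [Finset.sum_mul]
      _ = ∑ j, ‖lam j t - lbar t‖ := by
          apply Finset.sum_congr rfl
          intro j _
          rw [hA_col t ht j, one_mul]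
  constructor
  · apply Finset.sum_le_sum
    intro t ht
    simp only [Finset.mem_Icc] at ht
    exact hfirst t ht.1
  · -- second inequality
    have h1τ : (0 : ℝ) < 1 - τ := by linarith
    have hgeom : ∀ s : ℕ, ∑ t ∈ Finset.Icc (s + 1) T, τ ^ (t - 1 - s) ≤ 1 / (1 - τ) := by
      intro s
      have himg : ∑ t ∈ Finset.Icc (s + 1) T, τ ^ (t - 1 - s) =
          ∑ k ∈ (Finset.Icc (s + 1) T).image (fun t => t - (s + 1)), τ ^ k := by
        rw [Finset.sum_image]
        · apply Finset.sum_congr rfl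
          intro t ht
          congr 1
          simp only [Finset.mem_Icc] at ht
          omega
        · intro x hx y hy hxy
          simp only [Finset.mem_coe, Finset.mem_Icc] at hx hy hxy
          omega
      have hsub : (Finset.Icc (s + 1) T).image (fun t => t - (s + 1)) ⊆ Finset.range T := by
        intro k hk
        simp only [Finset.mem_image, Finset.mem_Icc] at hk
        obtain ⟨t, ⟨h1, h2⟩, h3⟩ := hk
        simp only [Finset.mem_range]
        omega
      calc ∑ t ∈ Finset.Icc (s + 1) T, τ ^ (t - 1 - s)
          = ∑ k ∈ (Finset.Icc (s + 1) T).image (fun t => t - (s + 1)), τ ^ k := himg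
        _ ≤ ∑ k ∈ Finset.range T, τ ^ k := by
            apply Finset.sum_le_sum_of_subset_of_nonneg hsub
            intro k _ _
            positivity
        _ ≤ 1 / (1 - τ) := by
            rw [geom_sum_eq (ne_of_lt hτ1) T]
            rw [show (τ ^ T - 1) / (τ - 1) = (1 - τ ^ T) / (1 - τ) by
              rw [← neg_div_neg_eq]; ring_nf]
            gcongr
            have : (0:ℝ) ≤ τ ^ T := le_of_lt (pow_pos hτ0 T)
            linarith
    have hperT : ∀ t ∈ Finset.Icc 1 T, ∑ i, ‖lam i t - lbar t‖ ≤
        ∑ s ∈ Finset.Icc 1 (t - 1), (N : ℝ) ^ 2 * Chat * (2 * C) * (τ ^ (t - 1 - s) * α s) := by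
      intro t ht
      simp only [Finset.mem_Icc] at ht
      obtain ⟨t', rfl⟩ : ∃ t', t = t' + 1 := ⟨t - 1, by omega⟩
      rw [show t' + 1 - 1 = t' from rfl]
      calc ∑ i, ‖lam i (t' + 1) - lbar (t' + 1)‖
          ≤ ∑ _i : Fin N, ∑ s ∈ Finset.Icc 1 t', (N : ℝ) * (Chat * τ ^ (t' - s) * (2 * C * α s)) :=
            Finset.sum_le_sum (fun i _ => hnorm t' i)
        _ = (N : ℝ) * ∑ s ∈ Finset.Icc 1 t', (N : ℝ) * (Chat * τ ^ (t' - s) * (2 * C * α s)) := by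
            rw [Finset.sum_const, Finset.card_univ, Fintype.card_fin, nsmul_eq_mul]
        _ = ∑ s ∈ Finset.Icc 1 t', (N : ℝ) ^ 2 * Chat * (2 * C) * (τ ^ (t' + 1 - 1 - s) * α s) := by
            rw [Finset.mul_sum]
            apply Finset.sum_congr rfl
            intro s _
            rw [show t' + 1 - 1 - s = t' - s from rfl]
            ring
    have hswap : ∑ t ∈ Finset.Icc 1 T, ∑ s ∈ Finset.Icc 1 (t - 1),
          (N : ℝ) ^ 2 * Chat * (2 * C) * (τ ^ (t - 1 - s) * α s)
        = ∑ s ∈ Finset.Icc 1 T, ∑ t ∈ Finset.Icc (s + 1) T,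
          (N : ℝ) ^ 2 * Chat * (2 * C) * (τ ^ (t - 1 - s) * α s) := by
      apply Finset.sum_comm'
      intro t s
      simp only [Finset.mem_Icc]
      omega
    have hsum_nonneg : 0 ≤ ∑ t ∈ Finset.Icc 1 T, α t := by
      apply Finset.sum_nonneg
      intro t ht
      simp only [Finset.mem_Icc] at ht
      exact (hα_pos t ht.1).le
    calc ∑ t ∈ Finset.Icc 1 T, ∑ i, ‖lam i t - lbar t‖
        ≤ ∑ t ∈ Finset.Icc 1 T, ∑ s ∈ Finset.Icc 1 (t - 1),
            (N : ℝ) ^ 2 * Chat * (2 * C) * (τ ^ (t - 1 - s) * α s) :=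
          Finset.sum_le_sum hperT
      _ = ∑ s ∈ Finset.Icc 1 T, ∑ t ∈ Finset.Icc (s + 1) T,
            (N : ℝ) ^ 2 * Chat * (2 * C) * (τ ^ (t - 1 - s) * α s) := hswap
      _ ≤ ∑ s ∈ Finset.Icc 1 T, (N : ℝ) ^ 2 * Chat * (2 * C) * α s * (1 / (1 - τ)) := by
          apply Finset.sum_le_sum
          intro s hs
          simp only [Finset.mem_Icc] at hs
          have hKα : (0 : ℝ) ≤ (N : ℝ) ^ 2 * Chat * (2 * C) * α s := by
            have := hα_pos s hs.1
            positivity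
          calc ∑ t ∈ Finset.Icc (s + 1) T, (N : ℝ) ^ 2 * Chat * (2 * C) * (τ ^ (t - 1 - s) * α s)
              = ((N : ℝ) ^ 2 * Chat * (2 * C) * α s) * ∑ t ∈ Finset.Icc (s + 1) T, τ ^ (t - 1 - s) := by
                rw [Finset.mul_sum]
                apply Finset.sum_congr rfl
                intro t _
                ring
            _ ≤ ((N : ℝ) ^ 2 * Chat * (2 * C) * α s) * (1 / (1 - τ)) :=
                mul_le_mul_of_nonneg_left (hgeom s) hKα
      _ = (2 * N ^ 2 * Chat * C / (1 - τ)) * ∑ s ∈ Finset.Icc 1 T, α s := by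
          rw [Finset.mul_sum]
          apply Finset.sum_congr rfl
          intro s _
          ring
      _ ≤ (2 * N ^ 2 * Chat * C / (1 - τ) + 2 * N * C) * ∑ t ∈ Finset.Icc 1 T, α t := by
          rw [add_mul]
          have h2NC : (0 : ℝ) ≤ 2 * N * C * ∑ t ∈ Finset.Icc 1 T, α t := by
            apply mul_nonneg _ hsum_nonneg
            positivity
          linarith
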